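/- Let π : ℤ → ℝ be finitely supported with π_t ≤ 0 for t ≠ 0 and ∑_t π_t ≥ 0. Then for every monotone φ : ℝ → ℝ with φ(0) = 0 and any points y_0, …, y_T ∈ ℝ with u_i = φ(y_i), we have ∑_{i=0}^{T} ∑_{j=0}^{T} u_i π_{i−j} y_j ≥ 0. -/
import Mathlib

open intervalIntegral

lemma zf_mono (φ : ℝ → ℝ) (hmono : ∀ x y : ℝ, 0 ≤ (φ x - φ y) * (x - y)) :
    Monotone φ := by
  intro a b hab
  rcases eq_or_lt_of_le hab with h | h
  · exact h ▸ le_rfl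
  · nlinarith [hmono b a]

lemma zf_key (φ : ℝ → ℝ) (hm : Monotone φ) (a b : ℝ) :
    (∫ s in (0:ℝ)..a, φ s) - (∫ s in (0:ℝ)..b, φ s) ≤ φ a * (a - b) := by
  have hint : ∀ c d : ℝ, IntervalIntegrable φ MeasureTheory.volume c d := fun c d =>
    Monotone.intervalIntegrable hm
  have h1 : (∫ s in (0:ℝ)..a, φ s) - (∫ s in (0:ℝ)..b, φ s) = ∫ s in b..a, φ s := by
    rw [integral_interval_sub_left (hint 0 a) (hint 0 b)]
  rw [h1]
  rcases le_total b a with h | h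
  · have h2 : (∫ s in b..a, φ s) ≤ ∫ s in b..a, φ a :=
      integral_mono_on h (hint b a) intervalIntegrable_const
        (fun x hx => hm hx.2)
    have h3 : (∫ s in b..a, (φ a : ℝ)) = (a - b) * φ a := by
      simp [integral_const, smul_eq_mul]
    nlinarith
  · have h2 : (∫ s in a..b, (φ a : ℝ)) ≤ ∫ s in a..b, φ s :=
      integral_mono_on h intervalIntegrable_const (hint a b)
        (fun x hx => hm hx.1)
    have h3 : (∫ s in a..b, (φ a : ℝ)) = (b - a) * φ a := by
      simp [integral_const, smul_eq_mul]
    have h4 : (∫ s in b..a, φ s) = - ∫ s in a..b, φ s :=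
      integral_symm a b
    nlinarith

lemma zf_Phi_nonneg (φ : ℝ → ℝ) (hm : Monotone φ) (hφ0 : φ 0 = 0) (x : ℝ) :
    0 ≤ ∫ s in (0:ℝ)..x, φ s := by
  rcases le_total 0 x with h | h
  · exact integral_nonneg h (fun s hs => hφ0 ▸ hm hs.1)
  · have h2 : (∫ s in x..(0:ℝ), φ s) ≤ ∫ s in x..(0:ℝ), (0:ℝ) :=
      integral_mono_on h (Monotone.intervalIntegrable hm) intervalIntegrable_const
        (fun s hs => hφ0 ▸ hm hs.2)
    rw [integral_const, smul_eq_mul, mul_zero] at h2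
    have h4 : (∫ s in (0:ℝ)..x, φ s) = - ∫ s in x..(0:ℝ), φ s :=
      integral_symm x 0
    linarith

lemma zf_sum_nonneg (π : ℤ → ℝ) (hfin : (Function.support π).Finite)
    (hneg : ∀ t : ℤ, t ≠ 0 → π t ≤ 0) (hsum : 0 ≤ ∑ᶠ t, π t)
    (s : Finset ℤ) (h0 : (0:ℤ) ∈ s) : 0 ≤ ∑ t ∈ s, π t := by
  classical
  set F : Finset ℤ := hfin.toFinset ∪ {0} with hF
  have hFsum : ∑ᶠ t, π t = ∑ t ∈ F, π t := by
    rw [finsum_eq_sum π hfin]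
    refine Finset.sum_subset (Finset.subset_union_left) (fun x hx hx' => ?_)
    have : x ∉ Function.support π := by simpa using hx'
    simpa using this
  have hsub : ∑ t ∈ s, π t = ∑ t ∈ s ∩ F, π t := by
    refine (Finset.sum_subset (Finset.inter_subset_left) (fun x hx hx' => ?_)).symm
    have hxF : x ∉ F := fun h => hx' (Finset.mem_inter.2 ⟨hx, h⟩)
    have : x ∉ Function.support π := fun h => hxF (by simp [hF, hfin.mem_toFinset.2 h])
    simpa using this
  have hinter : s ∩ F ⊆ F := Finset.inter_subset_right
  have hdiff : ∑ t ∈ F \ (s ∩ F), π t ≤ 0 := by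
    refine Finset.sum_nonpos (fun t ht => ?_)
    have ht0 : t ≠ 0 := by
      rintro rfl
      exact (Finset.mem_sdiff.1 ht).2 (Finset.mem_inter.2 ⟨h0, by simp [hF]⟩)
    exact hneg t ht0
  have hsplit : ∑ t ∈ F \ (s ∩ F), π t + ∑ t ∈ s ∩ F, π t = ∑ t ∈ F, π t :=
    Finset.sum_sdiff hinter
  rw [hsub]
  have := hFsum ▸ hsum
  linarith

theorem stmt13 (π : ℤ → ℝ) (hfin : (Function.support π).Finite)
    (hneg : ∀ t : ℤ, t ≠ 0 → π t ≤ 0)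
    (hsum : 0 ≤ ∑ᶠ t, π t)
    (φ : ℝ → ℝ)
    (hmono : ∀ x y : ℝ, 0 ≤ (φ x - φ y) * (x - y))
    (hφ0 : φ 0 = 0)
    (T : ℕ) (y : Fin (T + 1) → ℝ) :
    0 ≤ ∑ i : Fin (T + 1), ∑ j : Fin (T + 1),
      φ (y i) * π ((i : ℤ) - (j : ℤ)) * y j := by
  classical
  have hm : Monotone φ := zf_mono φ hmono
  set Φ : ℝ → ℝ := fun x => ∫ s in (0:ℝ)..x, φ s with hΦ
  have hkey : ∀ a b : ℝ, Φ a - Φ b ≤ φ a * (a - b) := zf_key φ hm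
  have hPhi0 : ∀ x, 0 ≤ Φ x := zf_Phi_nonneg φ hm hφ0
  have hA : ∀ x, 0 ≤ φ x * x - Φ x := by
    intro x
    have h := hkey x 0
    have : Φ (0:ℝ) = 0 := integral_same
    rw [this] at h
    nlinarith
  -- row and column sums
  have hrow : ∀ i : Fin (T + 1), 0 ≤ ∑ j : Fin (T + 1), π ((i : ℤ) - (j : ℤ)) := by
    intro i
    have hinj : ∀ a ∈ (Finset.univ : Finset (Fin (T+1))), ∀ b ∈ (Finset.univ : Finset (Fin (T+1))),
        ((i : ℤ) - (a : ℤ)) = ((i : ℤ) - (b : ℤ)) → a = b := by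
      intro a _ b _ h
      apply Fin.ext
      omega
    have himg : ∑ t ∈ Finset.image (fun j : Fin (T+1) => (i : ℤ) - (j : ℤ)) Finset.univ, π t
        = ∑ j : Fin (T+1), π ((i : ℤ) - (j : ℤ)) := Finset.sum_image hinj
    rw [← himg]
    refine zf_sum_nonneg π hfin hneg hsum _ ?_
    exact Finset.mem_image.2 ⟨i, Finset.mem_univ i, by ring⟩
  have hcol : ∀ j : Fin (T + 1), 0 ≤ ∑ i : Fin (T + 1), π ((i : ℤ) - (j : ℤ)) := by
    intro j
    have hinj : ∀ a ∈ (Finset.univ : Finset (Fin (T+1))), ∀ b ∈ (Finset.univ : Finset (Fin (T+1))),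
        ((a : ℤ) - (j : ℤ)) = ((b : ℤ) - (j : ℤ)) → a = b := by
      intro a _ b _ h
      apply Fin.ext
      omega
    have himg : ∑ t ∈ Finset.image (fun i : Fin (T+1) => (i : ℤ) - (j : ℤ)) Finset.univ, π t
        = ∑ i : Fin (T+1), π ((i : ℤ) - (j : ℤ)) := Finset.sum_image hinj
    rw [← himg]
    refine zf_sum_nonneg π hfin hneg hsum _ ?_
    exact Finset.mem_image.2 ⟨j, Finset.mem_univ j, by ring⟩
  -- pointwise bound
  have hterm : ∀ i j : Fin (T + 1),
      π ((i : ℤ) - (j : ℤ)) * ((φ (y i) * y i - Φ (y i)) + Φ (y j)) ≤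
        φ (y i) * π ((i : ℤ) - (j : ℤ)) * y j := by
    intro i j
    rcases eq_or_ne i j with rfl | hij
    · apply le_of_eq; ring
    · have hij' : (i : ℤ) - (j : ℤ) ≠ 0 := by
        intro h
        exact hij (Fin.ext (by omega))
      have hp := hneg _ hij'
      have hk := hkey (y i) (y j)
      nlinarith
  calc (0:ℝ) ≤ ∑ i : Fin (T+1), (φ (y i) * y i - Φ (y i)) *
          (∑ j : Fin (T+1), π ((i : ℤ) - (j : ℤ)))
        + ∑ j : Fin (T+1), Φ (y j) * (∑ i : Fin (T+1), π ((i : ℤ) - (j : ℤ))) := by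
        refine add_nonneg (Finset.sum_nonneg fun i _ => mul_nonneg (hA _) (hrow i))
          (Finset.sum_nonneg fun j _ => mul_nonneg (hPhi0 _) (hcol j))
    _ = ∑ i : Fin (T+1), ∑ j : Fin (T+1),
          π ((i : ℤ) - (j : ℤ)) * ((φ (y i) * y i - Φ (y i)) + Φ (y j)) := by
        have e1 : ∑ i : Fin (T+1), (φ (y i) * y i - Φ (y i)) *
            (∑ j : Fin (T+1), π ((i : ℤ) - (j : ℤ)))
            = ∑ i : Fin (T+1), ∑ j : Fin (T+1),
              π ((i : ℤ) - (j : ℤ)) * (φ (y i) * y i - Φ (y i)) := by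
          refine Finset.sum_congr rfl fun i _ => ?_
          rw [Finset.mul_sum]
          exact Finset.sum_congr rfl fun j _ => by ring
        have e2 : ∑ j : Fin (T+1), Φ (y j) * (∑ i : Fin (T+1), π ((i : ℤ) - (j : ℤ)))
            = ∑ i : Fin (T+1), ∑ j : Fin (T+1), π ((i : ℤ) - (j : ℤ)) * Φ (y j) := by
          have e3 : ∀ j : Fin (T+1), Φ (y j) * (∑ i : Fin (T+1), π ((i : ℤ) - (j : ℤ)))
              = ∑ i : Fin (T+1), π ((i : ℤ) - (j : ℤ)) * Φ (y j) := by
            intro j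
            rw [Finset.mul_sum]
            exact Finset.sum_congr rfl fun i _ => by ring
          rw [Finset.sum_congr rfl fun j _ => e3 j, Finset.sum_comm]
        rw [e1, e2, ← Finset.sum_add_distrib]
        refine Finset.sum_congr rfl fun i _ => ?_
        rw [← Finset.sum_add_distrib]
        exact Finset.sum_congr rfl fun j _ => by ring
    _ ≤ _ := Finset.sum_le_sum fun i _ => Finset.sum_le_sum fun j _ => hterm i j
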